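/- Let M > 0, set ρ₁ = 1 − exp(−π/(8M²)), and define F₁ on the unit disc D by F₁(z) = (π/(4M))·z − 2M·( z + (1 − z)·Log(1 − z) ), where Log is the principal branch of the complex logarithm. Then for every r with ρ₁ < r ≤ 1 there exist z₁ ≠ z₂ in D_r with F₁(z₁) = F₁(z₂); that is, F₁ is not injective on D_r for any r ∈ (ρ₁, 1]. Hence the univalence radius ρ₁ in the Landau-type theorem for P⁰_H(M) is sharp. -/

import Mathlib

/-- Sharpness of the univalence radius `ρ₁ = 1 - exp (-π/(8M²))` for the class
`P⁰_H(M)`: the extremal function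
`F₁(z) = (π/(4M)) z - 2M (z + (1-z) Log(1-z))` is not injective on `D_r`
for any `r ∈ (ρ₁, 1]`. -/
theorem landau_P0HM_sharpness (M : ℝ) (hM : 0 < M) :
    ∀ r : ℝ, 1 - Real.exp (-(Real.pi / (8 * M ^ 2))) < r → r ≤ 1 →
      ∃ z₁ ∈ Metric.ball (0:ℂ) r, ∃ z₂ ∈ Metric.ball (0:ℂ) r, z₁ ≠ z₂ ∧
        ((Real.pi / (4 * M) : ℝ) : ℂ) * z₁
            - ((2 * M : ℝ) : ℂ) * (z₁ + (1 - z₁) * Complex.log (1 - z₁)) =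
          ((Real.pi / (4 * M) : ℝ) : ℂ) * z₂
            - ((2 * M : ℝ) : ℂ) * (z₂ + (1 - z₂) * Complex.log (1 - z₂)) := by
  intro r hr1 hr2
  set ρ : ℝ := 1 - Real.exp (-(Real.pi / (8 * M ^ 2))) with hρdef
  set a : ℝ := Real.pi / (4 * M) with hadef
  set g : ℝ → ℝ := fun x => a * x - 2 * M * (x + (1 - x) * Real.log (1 - x)) with hgdef
  clear_value ρ a g
  have hπ := Real.pi_pos
  have hexp : Real.exp (-(Real.pi / (8 * M ^ 2))) < 1 := by
    rw [Real.exp_lt_one_iff]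
    have : 0 < Real.pi / (8 * M ^ 2) := by positivity
    linarith
  have hc0 : 0 < Real.pi / (8 * M ^ 2) := by positivity
  have hρ0 : 0 < ρ := by rw [hρdef]; linarith
  have hρ1 : ρ < 1 := by
    have : 0 < Real.exp (-(Real.pi / (8 * M ^ 2))) := Real.exp_pos _
    rw [hρdef]; linarith
  have hlogρ : Real.log (1 - ρ) = -(Real.pi / (8 * M ^ 2)) := by
    rw [hρdef]; simp [Real.log_exp]
  -- derivative of g
  have hderiv : ∀ x : ℝ, x < 1 → HasDerivAt g (a + 2 * M * Real.log (1 - x)) x := by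
    intro x hx
    have hne : (1 : ℝ) - x ≠ 0 := by linarith
    have h1 : HasDerivAt (fun y : ℝ => 1 - y) (-1) x := by
      simpa using (hasDerivAt_id x).const_sub 1
    have h2 : HasDerivAt (fun y : ℝ => Real.log (1 - y)) ((1 - x)⁻¹ * (-1)) x :=
      (Real.hasDerivAt_log hne).comp x h1
    have h3 : HasDerivAt (fun y : ℝ => (1 - y) * Real.log (1 - y))
        ((-1) * Real.log (1 - x) + (1 - x) * ((1 - x)⁻¹ * (-1))) x := h1.mul h2
    have h4 := ((hasDerivAt_id x).const_mul a).sub (((hasDerivAt_id x).add h3).const_mul (2 * M))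
    simp only [id_eq] at h4
    rw [hgdef]
    exact h4.congr_deriv (by rw [mul_inv_cancel_left₀ hne]; ring)
  have hdiff : ∀ x : ℝ, x < 1 → DifferentiableAt ℝ g x := fun x hx =>
    (hderiv x hx).differentiableAt
  have hcont : ContinuousOn g (Set.Iio 1) := fun x hx =>
    ((hdiff x hx).continuousAt).continuousWithinAt
  -- g is strictly monotone on [0, ρ]
  have hmono : StrictMonoOn g (Set.Icc 0 ρ) := by
    apply strictMonoOn_of_deriv_pos (convex_Icc 0 ρ)
    · exact hcont.mono (fun x hx => lt_of_le_of_lt hx.2 hρ1)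
    · intro x hx
      rw [interior_Icc] at hx
      have hx1 : x < 1 := lt_trans hx.2 hρ1
      rw [(hderiv x hx1).deriv]
      have hlt : Real.log (1 - ρ) < Real.log (1 - x) :=
        Real.log_lt_log (by linarith) (by linarith [hx.2])
      rw [hlogρ] at hlt
      have ha : a = 2 * M * (Real.pi / (8 * M ^ 2)) := by
        field_simp [hadef]; rw [hadef, div_mul_eq_mul_div, div_mul_eq_mul_div, div_eq_iff (by positivity)]; ring
      nlinarith
  -- g is strictly antitone past ρ (up to 1)
  have hanti : StrictAntiOn g (Set.Icc ρ ((1 + ρ) / 2)) := by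
    apply strictAntiOn_of_deriv_neg (convex_Icc _ _)
    · exact hcont.mono (fun x hx => lt_of_le_of_lt hx.2 (by linarith))
    · intro x hx
      rw [interior_Icc] at hx
      have hx1 : x < 1 := by have := hx.2; linarith
      rw [(hderiv x hx1).deriv]
      have hlt : Real.log (1 - x) < Real.log (1 - ρ) :=
        Real.log_lt_log (by linarith) (by linarith [hx.1])
      rw [hlogρ] at hlt
      have ha : a = 2 * M * (Real.pi / (8 * M ^ 2)) := by
        field_simp [hadef]; rw [hadef, div_mul_eq_mul_div, div_mul_eq_mul_div, div_eq_iff (by positivity)]; ring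
      nlinarith
  have hg0 : g 0 = 0 := by simp [hgdef]
  have hgρpos : 0 < g ρ := by
    have := hmono (Set.left_mem_Icc.2 hρ0.le) (Set.right_mem_Icc.2 hρ0.le) hρ0
    rwa [hg0] at this
  -- continuity of g at ρ gives a neighborhood where g > 0
  have hcρ : ContinuousAt g ρ := (hdiff ρ hρ1).continuousAt
  obtain ⟨δ, hδ0, hδ⟩ := Metric.continuousAt_iff.1 hcρ (g ρ) hgρpos
  -- choose x₂
  set x₂ : ℝ := ρ + min (δ / 2) (min ((r - ρ) / 2) ((1 - ρ) / 2)) with hx₂def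
  have hmin0 : 0 < min (δ / 2) (min ((r - ρ) / 2) ((1 - ρ) / 2)) := by
    have h1 : 0 < (r - ρ) / 2 := by linarith
    have h2 : 0 < (1 - ρ) / 2 := by linarith
    positivity
  have hx₂ρ : ρ < x₂ := by simp only [hx₂def]; linarith
  have hx₂r : x₂ < r := by
    have := (min_le_right (δ / 2) _).trans (min_le_left ((r - ρ) / 2) ((1 - ρ) / 2))
    simp only [hx₂def]; linarith
  have hx₂1 : x₂ ≤ (1 + ρ) / 2 := by
    have := (min_le_right (δ / 2) _).trans (min_le_right ((r - ρ) / 2) ((1 - ρ) / 2))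
    simp only [hx₂def]; linarith
  have hx₂lt1 : x₂ < 1 := by linarith
  have hgx₂pos : 0 < g x₂ := by
    have hd : dist x₂ ρ < δ := by
      rw [Real.dist_eq, abs_of_pos (by linarith)]
      have := min_le_left (δ / 2) (min ((r - ρ) / 2) ((1 - ρ) / 2))
      simp only [hx₂def]; linarith
    have := hδ hd
    rw [Real.dist_eq, abs_lt] at this
    linarith
  have hgx₂lt : g x₂ < g ρ :=
    hanti (Set.left_mem_Icc.2 (by linarith)) ⟨hx₂ρ.le, hx₂1⟩ hx₂ρ
  -- IVT on [0, ρ]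
  have hIVT := intermediate_value_Icc hρ0.le
      (hcont.mono (fun x hx => lt_of_le_of_lt hx.2 hρ1))
  have hmem : g x₂ ∈ Set.Icc (g 0) (g ρ) := ⟨by rw [hg0]; exact hgx₂pos.le, hgx₂lt.le⟩
  obtain ⟨x₁, hx₁mem, hx₁eq⟩ := hIVT hmem
  -- conclude
  refine ⟨(x₁ : ℂ), ?_, (x₂ : ℂ), ?_, ?_, ?_⟩
  · rw [Metric.mem_ball, dist_zero_right, Complex.norm_real, Real.norm_eq_abs,
      abs_of_nonneg hx₁mem.1]
    linarith [hx₁mem.2]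
  · rw [Metric.mem_ball, dist_zero_right, Complex.norm_real, Real.norm_eq_abs,
      abs_of_nonneg (by linarith [hx₁mem.1, hρ0] : (0:ℝ) ≤ x₂)]
    exact hx₂r
  · intro h
    rw [Complex.ofReal_inj] at h
    have : x₁ ≤ ρ := hx₁mem.2
    linarith
  · have hcast : ∀ x : ℝ, x < 1 →
        ((a : ℝ) : ℂ) * x
          - ((2 * M : ℝ) : ℂ) * (x + (1 - x) * Complex.log (1 - x)) = ((g x : ℝ) : ℂ) := by
      intro x hx
      have h1 : ((1 : ℂ) - (x : ℂ)) = ((1 - x : ℝ) : ℂ) := by push_cast; ring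
      rw [h1, ← Complex.ofReal_log (by linarith : (0:ℝ) ≤ 1 - x)]
      simp only [hgdef, hadef]
      push_cast
      ring
    rw [hcast x₁ (by linarith [hx₁mem.2]), hcast x₂ hx₂lt1, hx₁eq]
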